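/- arXiv:2002.07121 — 4 statements merged into one kernel-verified Lean document; each statement's English description precedes it below -/
import Mathlib

section
/- Suppose α ∈ ℤ_p^N is partitioned as (α⁰, α¹, …, α^{p-1}) where α^r collects the coordinates lying in the coset r + pℤ_p. Then |Δ_N(α)|_p = ∏_{r=0}^{p-1} |Δ_{n_r}(α^r)|_p, where n_r is the number of coordinates in the coset r + pℤ_p. -/
open MeasureTheory Finset

noncomputable instance padicMS (p : ℕ) [Fact p.Prime] : MeasurableSpace ℤ_[p] := borel _
instance padicBS (p : ℕ) [Fact p.Prime] : BorelSpace ℤ_[p] := ⟨rfl⟩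

/-- Haar probability measure on `ℤ_[p]`. -/
noncomputable def padicHaar (p : ℕ) [Fact p.Prime] : Measure ℤ_[p] :=
  Measure.addHaarMeasure (⊤ : TopologicalSpace.PositiveCompacts ℤ_[p])

/-- Product Haar measure on `ℤ_[p]^N`. -/
noncomputable def padicHaarPi (p : ℕ) [Fact p.Prime] (N : ℕ) : Measure (Fin N → ℤ_[p]) :=
  Measure.pi fun _ => padicHaar p

/-- Vandermonde product `∏_{m<n} (α n - α m)`. -/
noncomputable def vand {p : ℕ} [Fact p.Prime] {N : ℕ} (α : Fin N → ℤ_[p]) : ℤ_[p] :=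
  ∏ q ∈ Finset.univ.filter (fun q : Fin N × Fin N => q.1 < q.2), (α q.2 - α q.1)

/-- Vandermonde product over the coordinates indexed by a finset `s`. -/
noncomputable def vandOn {p : ℕ} [Fact p.Prime] {N : ℕ} (s : Finset (Fin N))
    (α : Fin N → ℤ_[p]) : ℤ_[p] :=
  ∏ q ∈ (s ×ˢ s).filter (fun q : Fin N × Fin N => q.1 < q.2), (α q.2 - α q.1)

lemma norm_eq_one_of_toZMod_ne {p : ℕ} [Fact p.Prime] (x : ℤ_[p])
    (h : PadicInt.toZMod x ≠ 0) : ‖x‖ = 1 := by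
  by_contra h'
  have hlt : ‖x‖ < 1 := lt_of_le_of_ne (PadicInt.norm_le_one x) h'
  apply h
  have : x ∈ RingHom.ker (PadicInt.toZMod (p := p)) := by
    rw [PadicInt.ker_toZMod, PadicInt.maximalIdeal_eq_span_p, Ideal.mem_span_singleton]
    exact (PadicInt.norm_lt_one_iff_dvd x).mp hlt
  exact this

lemma padic_norm_prod {p : ℕ} [Fact p.Prime] {ι : Type*} (s : Finset ι) (f : ι → ℤ_[p]) :
    ‖∏ i ∈ s, f i‖ = ∏ i ∈ s, ‖f i‖ := by
  classical
  induction s using Finset.induction with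
  | empty => simp
  | insert _ _ h ih => rw [Finset.prod_insert h, Finset.prod_insert h, norm_mul, ih]

/-- The Vandermonde absolute value factors over the cosets of the maximal ideal:
`|Δ_N(α)| = ∏_{r : ZMod p} |Δ(α restricted to coordinates in the coset r + pℤ_p)|`. -/
theorem vandermonde_norm_factors_over_cosets (p : ℕ) [Fact p.Prime] (N : ℕ)
    (α : Fin N → ℤ_[p]) :
    ‖vand α‖ = ∏ r : ZMod p,
      ‖vandOn (Finset.univ.filter fun i => PadicInt.toZMod (α i) = r) α‖ := by
  classical
  unfold vand vandOn
  simp only [padic_norm_prod]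
  set s : ZMod p → Finset (Fin N) := fun r => Finset.univ.filter fun i => PadicInt.toZMod (α i) = r
  set B : ZMod p → Finset (Fin N × Fin N) := fun r =>
    ((s r) ×ˢ (s r)).filter (fun q : Fin N × Fin N => q.1 < q.2)
  have hdisj : ((Finset.univ : Finset (ZMod p)) : Set (ZMod p)).PairwiseDisjoint B := by
    intro r _ r' _ hrr'
    simp only [Finset.disjoint_left]
    intro q hq hq'
    simp only [B, s, Finset.mem_filter, Finset.mem_product] at hq hq'
    exact hrr' (hq.1.1.2.symm.trans hq'.1.1.2)
  rw [← Finset.prod_biUnion hdisj]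
  symm
  apply Finset.prod_subset
  · intro q hq
    simp only [Finset.mem_biUnion, B, s, Finset.mem_filter, Finset.mem_product,
      Finset.mem_univ, true_and] at hq ⊢
    obtain ⟨r, hr⟩ := hq
    exact hr.2
  · intro q hq hq'
    simp only [Finset.mem_biUnion, Finset.mem_univ, true_and, B, s, Finset.mem_filter,
      Finset.mem_product] at hq hq'
    push_neg at hq'
    have hne : PadicInt.toZMod (α q.1) ≠ PadicInt.toZMod (α q.2) := by
      intro h
      exact absurd hq (not_lt.mpr (hq' _ ⟨rfl, h.symm⟩))
    apply norm_eq_one_of_toZMod_ne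
    rw [map_sub, sub_ne_zero]
    exact fun h => hne h.symm
end

section
/- The measure of the set of α ∈ ℤ_p^N whose coordinates all lie in pairwise distinct cosets of pℤ_p equals (p)_N / p^N = p(p-1)⋯(p-N+1)/p^N for N ≤ p, and equals 0 for N > p. -/
open MeasureTheory Finset

section Aux

variable {p : ℕ} [Fact p.Prime]

lemma toZMod_eq_zero_iff (x : ℤ_[p]) : PadicInt.toZMod x = 0 ↔ ‖x‖ < 1 := by
  rw [← RingHom.mem_ker, PadicInt.ker_toZMod, PadicInt.maximalIdeal_eq_span_p,
    Ideal.mem_span_singleton, ← PadicInt.norm_lt_one_iff_dvd]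

lemma norm_eq_one_iff (x : ℤ_[p]) : ‖x‖ = 1 ↔ PadicInt.toZMod x ≠ 0 := by
  rw [Ne, toZMod_eq_zero_iff]
  constructor
  · intro h h'; rw [h] at h'; exact lt_irrefl _ h'
  · intro h; exact le_antisymm (PadicInt.norm_le_one x) (not_lt.mp h)

lemma fiber_zero_eq : (PadicInt.toZMod ⁻¹' {(0 : ZMod p)} : Set ℤ_[p]) = Metric.ball 0 1 := by
  ext x
  simp [toZMod_eq_zero_iff, mem_ball_zero_iff]

lemma measurable_fiber_zero : MeasurableSet (PadicInt.toZMod ⁻¹' {(0 : ZMod p)} : Set ℤ_[p]) := by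
  rw [fiber_zero_eq]; exact measurableSet_ball

lemma fiber_eq (c : ZMod p) :
    (PadicInt.toZMod ⁻¹' {c} : Set ℤ_[p])
      = (fun x => x + -((c.val : ℕ) : ℤ_[p])) ⁻¹' (PadicInt.toZMod ⁻¹' {(0 : ZMod p)}) := by
  have hc : PadicInt.toZMod ((c.val : ℕ) : ℤ_[p]) = c := by
    rw [map_natCast]; exact ZMod.natCast_rightInverse c
  ext x
  simp only [Set.mem_preimage, Set.mem_singleton_iff, map_add, map_neg, hc,
    add_neg_eq_zero]

lemma measurable_fiber (c : ZMod p) :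
    MeasurableSet (PadicInt.toZMod ⁻¹' {c} : Set ℤ_[p]) := by
  rw [fiber_eq]
  exact (measurable_add_const _) measurable_fiber_zero

instance : IsProbabilityMeasure (padicHaar p) := by
  constructor
  rw [padicHaar, ← TopologicalSpace.PositiveCompacts.coe_top (α := ℤ_[p]),
    Measure.addHaarMeasure_self]

instance : (padicHaar p).IsAddLeftInvariant := by
  unfold padicHaar; infer_instance

instance : (padicHaar p).IsAddRightInvariant := by
  unfold padicHaar; infer_instance

lemma measure_fiber (c : ZMod p) :
    padicHaar p (PadicInt.toZMod ⁻¹' {c}) = (p : ENNReal)⁻¹ := by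
  have hzero : ∀ c : ZMod p, padicHaar p (PadicInt.toZMod ⁻¹' {c})
      = padicHaar p (PadicInt.toZMod ⁻¹' {(0 : ZMod p)}) := by
    intro c
    rw [fiber_eq c]
    exact measure_preimage_add_right (padicHaar p) _ _
  have hsum : ∑ c : ZMod p, padicHaar p (PadicInt.toZMod ⁻¹' {c}) = 1 := by
    rw [← tsum_fintype (L := SummationFilter.unconditional _), ← measure_iUnion ?_ (fun c => measurable_fiber c)]
    · have : (⋃ c : ZMod p, PadicInt.toZMod ⁻¹' {c}) = (Set.univ : Set ℤ_[p]) :=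
        Set.iUnion_eq_univ_iff.mpr fun x => ⟨PadicInt.toZMod x, rfl⟩
      rw [this, measure_univ]
    · intro a b hab
      exact Set.disjoint_left.mpr fun x hx hx' => hab (hx ▸ hx' ▸ rfl)
  have hp : (p : ENNReal) ≠ 0 := by
    exact_mod_cast Nat.cast_ne_zero.mpr (Fact.out (p := p.Prime)).ne_zero
  have hcard : ∑ c : ZMod p, padicHaar p (PadicInt.toZMod ⁻¹' {c})
      = (p : ENNReal) * padicHaar p (PadicInt.toZMod ⁻¹' {(0 : ZMod p)}) := by
    calc ∑ c : ZMod p, padicHaar p (PadicInt.toZMod ⁻¹' {c})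
        = ∑ _c : ZMod p, padicHaar p (PadicInt.toZMod ⁻¹' {(0 : ZMod p)}) :=
          Finset.sum_congr rfl fun c _ => hzero c
      _ = (Fintype.card (ZMod p) : ENNReal) * padicHaar p (PadicInt.toZMod ⁻¹' {(0 : ZMod p)}) := by
          rw [Finset.sum_const, nsmul_eq_mul, Finset.card_univ]
      _ = (p : ENNReal) * padicHaar p (PadicInt.toZMod ⁻¹' {(0 : ZMod p)}) := by
          rw [ZMod.card]
  have h0 : padicHaar p (PadicInt.toZMod ⁻¹' {(0 : ZMod p)}) = (p : ENNReal)⁻¹ := by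
    have h1 : (p : ENNReal) * padicHaar p (PadicInt.toZMod ⁻¹' {(0 : ZMod p)}) = 1 := by
      rw [← hcard, hsum]
    calc padicHaar p (PadicInt.toZMod ⁻¹' {(0 : ZMod p)})
        = (p : ENNReal)⁻¹ * ((p : ENNReal) * padicHaar p (PadicInt.toZMod ⁻¹' {(0 : ZMod p)})) := by
          rw [← mul_assoc, ENNReal.inv_mul_cancel hp (ENNReal.natCast_ne_top p), one_mul]
      _ = (p : ENNReal)⁻¹ := by rw [h1, mul_one]
  rw [hzero c, h0]

end Aux

/-- The measure of the set of `α ∈ ℤ_p^N` with all coordinates in pairwise distinct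
cosets of `pℤ_p` is `p(p-1)⋯(p-N+1)/p^N` if `N ≤ p`, and `0` if `N > p`. -/
theorem measure_distinct_cosets (p : ℕ) [Fact p.Prime] (N : ℕ) :
    (N ≤ p → (padicHaarPi p N {α : Fin N → ℤ_[p] | ∀ i j : Fin N, i ≠ j → ‖α i - α j‖ = 1}).toReal
        = (∏ k ∈ Finset.range N, ((p : ℝ) - (k : ℝ))) / (p : ℝ) ^ N) ∧
    (p < N → padicHaarPi p N {α : Fin N → ℤ_[p] | ∀ i j : Fin N, i ≠ j → ‖α i - α j‖ = 1} = 0) := by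
  classical
  have key : padicHaarPi p N {α : Fin N → ℤ_[p] | ∀ i j : Fin N, i ≠ j → ‖α i - α j‖ = 1}
      = (p.descFactorial N : ENNReal) * ((p : ENNReal)⁻¹) ^ N := by
    have hSeq : {α : Fin N → ℤ_[p] | ∀ i j : Fin N, i ≠ j → ‖α i - α j‖ = 1}
        = ⋃ f ∈ Finset.univ.filter (fun f : Fin N → ZMod p => Function.Injective f),
          Set.pi Set.univ (fun i => PadicInt.toZMod ⁻¹' {f i}) := by
      ext α
      simp only [Set.mem_setOf_eq, Set.mem_iUnion, Finset.mem_filter, Finset.mem_univ, true_and,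
        Set.mem_pi, Set.mem_univ, Set.mem_preimage, Set.mem_singleton_iff, forall_true_left]
      constructor
      · intro h
        refine ⟨fun i => PadicInt.toZMod (α i), ?_, fun i => rfl⟩
        intro i j hij
        by_contra hne
        have h1 := h i j hne
        rw [norm_eq_one_iff] at h1
        exact h1 (by rw [map_sub]; exact sub_eq_zero.mpr hij)
      · rintro ⟨f, hf, hfa⟩ i j hij
        rw [norm_eq_one_iff, map_sub, hfa, hfa]
        exact sub_ne_zero.mpr fun h => hij (hf h)
    rw [hSeq, measure_biUnion_finset ?disj fun f _ => MeasurableSet.univ_pi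
      fun i => measurable_fiber (f i)]
    case disj =>
      intro f hf g hg hfg
      refine Set.disjoint_left.mpr fun α hα hα' => hfg ?_
      funext i
      rw [← hα i (Set.mem_univ i), ← hα' i (Set.mem_univ i)]
    have hterm : ∀ f : Fin N → ZMod p,
        padicHaarPi p N (Set.pi Set.univ (fun i => PadicInt.toZMod ⁻¹' {f i}))
          = ((p : ENNReal)⁻¹) ^ N := by
      intro f
      rw [padicHaarPi, Measure.pi_pi]
      simp [measure_fiber]
    rw [Finset.sum_congr rfl fun f _ => hterm f, Finset.sum_const, nsmul_eq_mul]
    congr 1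
    have hcard : (Finset.univ.filter (fun f : Fin N → ZMod p => Function.Injective f)).card
        = p.descFactorial N := by
      rw [← Fintype.card_subtype,
        Fintype.card_congr (Equiv.subtypeInjectiveEquivEmbedding (Fin N) (ZMod p)),
        Fintype.card_embedding_eq, Fintype.card_fin, ZMod.card]
    rw [hcard]
  constructor
  · intro hNp
    rw [key]
    have hp : (p : ℝ) ≠ 0 := by
      exact_mod_cast (Fact.out (p := p.Prime)).ne_zero
    rw [ENNReal.toReal_mul, ENNReal.toReal_pow, ENNReal.toReal_inv, ENNReal.toReal_natCast,
      ENNReal.toReal_natCast]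
    have hd : ((p.descFactorial N : ℕ) : ℝ) = ∏ k ∈ Finset.range N, ((p : ℝ) - (k : ℝ)) := by
      rw [Nat.descFactorial_eq_prod_range, Nat.cast_prod]
      refine Finset.prod_congr rfl fun k hk => ?_
      rw [Nat.cast_sub (le_of_lt (lt_of_lt_of_le (Finset.mem_range.mp hk) hNp))]
    rw [hd, inv_pow, div_eq_mul_inv]
  · intro hpN
    rw [key, Nat.descFactorial_eq_zero_iff_lt.mpr hpN, Nat.cast_zero, zero_mul]
end

section
/- Let R be an integral domain and C ∈ R nonzero. Then the ring (R[[t]], +, ⋆), with ⋆-product (Σ a_n t^n) ⋆ (Σ b_m t^m) = Σ_{n,m} C^{nm} a_n b_m t^{n+m}, has no zero divisors. -/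
open PowerSeries

/-- The `C`-twisted product on formal power series:
`(Σ aₙ tⁿ) ⋆ (Σ bₘ tᵐ) = Σ_{n,m} C^{nm} aₙ bₘ t^{n+m}`. -/
noncomputable def starMul {R : Type*} [CommRing R] (C : R) (f g : PowerSeries R) :
    PowerSeries R :=
  PowerSeries.mk fun k => ∑ q ∈ Finset.HasAntidiagonal.antidiagonal k,
    C ^ (q.1 * q.2) * (PowerSeries.coeff q.1 f) * (PowerSeries.coeff q.2 g)
/-- If `R` is an integral domain and `C ≠ 0`, the `⋆`-ring has no zero divisors. -/
theorem starMul_no_zero_divisors {R : Type*} [CommRing R] [IsDomain R] (C : R) (hC : C ≠ 0)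
    (f g : PowerSeries R) (h : starMul C f g = 0) : f = 0 ∨ g = 0 := by
  classical
  by_contra hcon
  push_neg at hcon
  obtain ⟨hf, hg⟩ := hcon
  have hfe : ∃ n, coeff n f ≠ 0 := by
    by_contra he; push_neg at he
    exact hf (PowerSeries.ext fun n => by simp [he n])
  have hge : ∃ n, coeff n g ≠ 0 := by
    by_contra he; push_neg at he
    exact hg (PowerSeries.ext fun n => by simp [he n])
  set n := Nat.find hfe with hn
  set m := Nat.find hge with hm
  have hfn : coeff n f ≠ 0 := Nat.find_spec hfe
  have hgm : coeff m g ≠ 0 := Nat.find_spec hge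
  have hkey : coeff (n + m) (starMul C f g) =
      C ^ (n * m) * coeff n f * coeff m g := by
    rw [starMul, coeff_mk]
    rw [Finset.sum_eq_single (n, m)]
    · rintro ⟨a, b⟩ hab hne
      rw [Finset.HasAntidiagonal.mem_antidiagonal] at hab
      rcases lt_or_ge a n with hlt | hge'
      · have : coeff a f = 0 := by
          by_contra hc
          exact absurd (Nat.find_le hc) (not_le.mpr hlt)
        simp [this]
      · rcases eq_or_lt_of_le hge' with heq | hlt
        · have hb : b = m := by omega
          exact absurd (by simp [heq, hb]) hne
        · have hbm : b < m := by omega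
          have : coeff b g = 0 := by
            by_contra hc
            exact absurd (Nat.find_le hc) (not_le.mpr hbm)
          simp [this]
    · intro hnm
      exact absurd (Finset.HasAntidiagonal.mem_antidiagonal.mpr (by rfl)) hnm
  rw [h, map_zero] at hkey
  exact (mul_ne_zero (mul_ne_zero (pow_ne_zero _ hC) hfn) hgm) hkey.symm
end

section
/- Let R be a commutative ring, C ∈ R, and define the transform T(Σ a_n t^n) = Σ C^{binom(n,2)} a_n t^n on R[[t]]. Then T(f) ⋆ T(g) = T(f · g), where · is the usual power series product and ⋆ is the C-twisted product (Σ a_n t^n) ⋆ (Σ b_m t^m) = Σ_{n,m} C^{nm} a_n b_m t^{n+m}. -/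
open PowerSeries

/-- The transform `T(Σ aₙ tⁿ) = Σ C^{binom(n,2)} aₙ tⁿ`. -/
noncomputable def starTransform {R : Type*} [CommRing R] (C : R) (f : PowerSeries R) :
    PowerSeries R :=
  PowerSeries.mk fun n => C ^ (Nat.choose n 2) * PowerSeries.coeff n f

lemma choose_two_add (n m : ℕ) :
    Nat.choose n 2 + Nat.choose m 2 + n * m = Nat.choose (n + m) 2 := by
  induction m with
  | zero => simp
  | succ m ih =>
      have h1 : Nat.choose (m + 1) 2 = Nat.choose m 2 + m := by
        simp [Nat.choose_succ_succ, Nat.choose_one_right, Nat.add_comm]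
      have h2 : Nat.choose (n + (m + 1)) 2 = Nat.choose (n + m) 2 + (n + m) := by
        rw [← Nat.add_assoc]
        simp [Nat.choose_succ_succ, Nat.choose_one_right, Nat.add_comm]
      rw [h1, h2, ← ih]
      ring

/-- `T(f) ⋆ T(g) = T(f · g)`. -/
theorem starTransform_mul {R : Type*} [CommRing R] (C : R) (f g : PowerSeries R) :
    starMul C (starTransform C f) (starTransform C g) = starTransform C (f * g) := by
  ext k
  simp only [starMul, starTransform, coeff_mk, coeff_mul, Finset.mul_sum]
  refine Finset.sum_congr rfl fun q hq => ?_
  rw [Finset.HasAntidiagonal.mem_antidiagonal] at hq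
  rw [← hq, ← choose_two_add q.1 q.2]
  ring
end
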